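/- Let C be any real m×m matrix and let I be the m×m identity matrix. Then (x,x) ∈ Δ_m × Δ_m is a Nash equilibrium of the symmetric bimatrix game (C, Cᵀ) if and only if there exists y ∈ Δ_m such that (x,y) is a Nash equilibrium of the imitation game (I, Cᵀ). -/

import Mathlib

open Matrix BigOperators

/-- A mixed strategy: nonnegative entries summing to 1. -/
def IsMixed {I : Type*} [Fintype I] (x : I → ℝ) : Prop :=
  (∀ i, 0 ≤ x i) ∧ ∑ i, x i = 1

/-- `(x, y)` is a Nash equilibrium of the bimatrix game `(A, B)`. -/
def IsNash {I J : Type*} [Fintype I] [Fintype J]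
    (A B : Matrix I J ℝ) (x : I → ℝ) (y : J → ℝ) : Prop :=
  IsMixed x ∧ IsMixed y ∧
  (∀ x' : I → ℝ, IsMixed x' → x' ⬝ᵥ (A *ᵥ y) ≤ x ⬝ᵥ (A *ᵥ y)) ∧
  (∀ y' : J → ℝ, IsMixed y' → x ⬝ᵥ (B *ᵥ y') ≤ x ⬝ᵥ (B *ᵥ y))

lemma mixed_dot_le {m : ℕ} {x v : Fin m → ℝ} (hx : IsMixed x) {c : ℝ}
    (h : ∀ i, v i ≤ c) : x ⬝ᵥ v ≤ c := by
  have : x ⬝ᵥ v ≤ ∑ i, x i * c :=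
    Finset.sum_le_sum fun i _ => mul_le_mul_of_nonneg_left (h i) (hx.1 i)
  simpa [← Finset.sum_mul, hx.2] using this

lemma single_mixed {m : ℕ} (i : Fin m) : IsMixed (Pi.single i 1 : Fin m → ℝ) := by
  constructor
  · intro j
    by_cases h : j = i <;> simp [Pi.single_apply, h]
  · simp

lemma coord_le {m : ℕ} {x v : Fin m → ℝ}
    (hbest : ∀ x' : Fin m → ℝ, IsMixed x' → x' ⬝ᵥ v ≤ x ⬝ᵥ v) (i : Fin m) :
    v i ≤ x ⬝ᵥ v := by
  have := hbest (Pi.single i 1) (single_mixed i)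
  simpa [dotProduct, Pi.single_apply] using this

lemma slackness {m : ℕ} {x v : Fin m → ℝ} (hx : IsMixed x) {c : ℝ}
    (h : ∀ i, v i ≤ c) (he : x ⬝ᵥ v = c) : ∀ i, 0 < x i → v i = c := by
  have hsum : ∑ i, x i * (c - v i) = 0 := by
    simp only [mul_sub]
    rw [Finset.sum_sub_distrib, ← Finset.sum_mul, hx.2, one_mul]
    simpa [dotProduct] using sub_eq_zero_of_eq he.symm
  have hz : ∀ i ∈ Finset.univ, x i * (c - v i) = 0 := by
    rw [← Finset.sum_eq_zero_iff_of_nonneg]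
    · exact hsum
    · intro i _
      exact mul_nonneg (hx.1 i) (sub_nonneg.mpr (h i))
  intro i hi
  have := hz i (Finset.mem_univ i)
  rcases mul_eq_zero.mp this with h1 | h2
  · exact absurd h1 (ne_of_gt hi)
  · linarith [sub_eq_zero.mp h2]

lemma dot_transpose {m : ℕ} (C : Matrix (Fin m) (Fin m) ℝ) (x z : Fin m → ℝ) :
    x ⬝ᵥ (Cᵀ *ᵥ z) = z ⬝ᵥ (C *ᵥ x) := by
  rw [dotProduct_mulVec, vecMul_transpose, dotProduct_comm]

/-- McLennan–Tourky: `(x,x)` is a symmetric Nash equilibrium of `(C, Cᵀ)` iff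
`(x,y)` is a Nash equilibrium of the imitation game `(I, Cᵀ)` for some `y`. -/
theorem stmt1 {m : ℕ} (C : Matrix (Fin m) (Fin m) ℝ) (x : Fin m → ℝ) :
    IsNash C Cᵀ x x ↔
      ∃ y : Fin m → ℝ, IsNash (1 : Matrix (Fin m) (Fin m) ℝ) Cᵀ x y := by
  constructor
  · rintro ⟨hx, -, h1, -⟩
    set v : Fin m → ℝ := C *ᵥ x with hv
    set c : ℝ := x ⬝ᵥ v with hc
    have hvle : ∀ i, v i ≤ c := coord_le h1
    have hslack : ∀ i, 0 < x i → v i = c := slackness hx hvle rfl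
    set S : Finset (Fin m) := Finset.univ.filter (fun i => 0 < x i) with hS
    have hxS : ∀ i, i ∈ S ↔ 0 < x i := by intro i; simp [hS]
    have hxzero : ∀ i, i ∉ S → x i = 0 := by
      intro i hi
      rcases lt_or_eq_of_le (hx.1 i) with hlt | heq
      · exact absurd ((hxS i).mpr hlt) hi
      · exact heq.symm
    have hScard : 0 < S.card := by
      rw [Finset.card_pos]
      by_contra h
      have hall : ∀ i, x i = 0 := fun i => hxzero i (fun hi => h ⟨i, hi⟩)
      have h2 := hx.2
      rw [Finset.sum_eq_zero (fun i _ => hall i)] at h2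
      norm_num at h2
    set N : ℝ := (S.card : ℝ) with hN
    have hNpos : 0 < N := by positivity
    set y : Fin m → ℝ := fun i => if i ∈ S then N⁻¹ else 0 with hy
    have hymix : IsMixed y := by
      constructor
      · intro i; by_cases h : i ∈ S <;> simp [hy, h, le_of_lt (inv_pos.mpr hNpos)]
      · rw [hy]
        rw [Finset.sum_ite_mem, Finset.univ_inter, Finset.sum_const, nsmul_eq_mul]
        field_simp
        exact hN.symm
    have hyle : ∀ i, y i ≤ N⁻¹ := by
      intro i; by_cases h : i ∈ S <;> simp [hy, h, le_of_lt (inv_pos.mpr hNpos)]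
    have hxy : x ⬝ᵥ y = N⁻¹ := by
      have : x ⬝ᵥ y = ∑ i ∈ S, x i * N⁻¹ := by
        rw [dotProduct, ← Finset.sum_subset (Finset.subset_univ S)]
        · exact Finset.sum_congr rfl (fun i hi => by simp [hy, hi])
        · intro i _ hi; simp [hxzero i hi]
      rw [this, ← Finset.sum_mul]
      have hsx : ∑ i ∈ S, x i = 1 := by
        rw [← hx.2]
        apply Finset.sum_subset (Finset.subset_univ S)
        intro i _ hi; exact hxzero i hi
      rw [hsx, one_mul]
    have hyv : y ⬝ᵥ v = c := by
      have : y ⬝ᵥ v = ∑ i ∈ S, N⁻¹ * c := by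
        rw [dotProduct, ← Finset.sum_subset (Finset.subset_univ S)]
        · exact Finset.sum_congr rfl (fun i hi => by
            simp [hy, hi, hslack i ((hxS i).mp hi)])
        · intro i _ hi; simp [hy, hi]
      rw [this, Finset.sum_const, nsmul_eq_mul, ← hN, ← mul_assoc,
        mul_inv_cancel₀ (ne_of_gt hNpos), one_mul]
    refine ⟨y, hx, hymix, ?_, ?_⟩
    · intro x' hx'
      rw [one_mulVec, hxy]
      exact mixed_dot_le hx' hyle
    · intro y' hy'
      rw [dot_transpose, dot_transpose, ← hv, hyv]
      exact mixed_dot_le hy' hvle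
  · rintro ⟨y, hx, hym, h1, h2⟩
    simp only [one_mulVec] at h1
    set v : Fin m → ℝ := C *ᵥ x with hv
    have h2' : ∀ y' : Fin m → ℝ, IsMixed y' → y' ⬝ᵥ v ≤ y ⬝ᵥ v := by
      intro y' hy'
      have := h2 y' hy'
      rwa [dot_transpose, dot_transpose, ← hv] at this
    set c : ℝ := y ⬝ᵥ v with hc
    have hvle : ∀ j, v j ≤ c := coord_le h2'
    have hylsack : ∀ j, 0 < y j → v j = c := slackness hym hvle rfl
    set d : ℝ := x ⬝ᵥ y with hd
    have hyle : ∀ i, y i ≤ d := coord_le h1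
    have hxslack : ∀ i, 0 < x i → y i = d := slackness hx hyle rfl
    have hdpos : 0 < d := by
      by_contra hle
      push_neg at hle
      have : ∀ i, y i = 0 := fun i => le_antisymm (le_trans (hyle i) hle) (hym.1 i)
      have h2y := hym.2
      rw [Finset.sum_eq_zero (fun i _ => this i)] at h2y
      norm_num at h2y
    have hxv : x ⬝ᵥ v = c := by
      have : ∀ i ∈ Finset.univ, x i * v i = x i * c := by
        intro i _
        rcases lt_or_eq_of_le (hx.1 i) with hlt | heq
        · rw [hylsack i (by rw [hxslack i hlt]; exact hdpos)]
        · rw [← heq]; ring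
      rw [dotProduct, Finset.sum_congr rfl this, ← Finset.sum_mul, hx.2, one_mul]
    refine ⟨hx, hx, ?_, ?_⟩
    · intro x' hx'
      rw [← hv, hxv]
      exact mixed_dot_le hx' hvle
    · intro y' hy'
      rw [dot_transpose, dot_transpose, ← hv, hxv]
      exact mixed_dot_le hy' hvle
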